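/- Summing the QCE residual equations across the interface gives m₁ = m₂ + hΔρ/(φ''_F + 4φ''_{2F}): if e is a 2N-periodic sequence that equals m₁hj + β(λ^j - λ^{-j})/λ^K for 0 ≤ j ≤ K, equals m₂hj - m₂ for K+2 ≤ j ≤ N (with arbitrary value at j = K+1), and satisfies the homogeneous atomistic recurrence in the atomistic interior and continuum recurrence in the continuum interior, then Σ_{j=K-1}^{K+2}(L^{qce,h}e)_j = (φ''_F + 4φ''_{2F})(m₁ - m₂)/h. -/

import Mathlib

/-- Backward difference quotient. -/
noncomputable def Dq (h : ℝ) (v : ℤ → ℝ) (j : ℤ) : ℝ := (v j - v (j - 1)) / h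

/-- Quadratic continuum strain energy density `Ŵ(ε) = (1/2)(a+4b)ε²`. -/
noncomputable def What (a b ε : ℝ) : ℝ := (1 / 2) * (a + 4 * b) * ε ^ 2

/-- Quadratic per-atom atomistic energy `Ê_j(v)`. -/
noncomputable def Ehat (a b h : ℝ) (v : ℤ → ℝ) (j : ℤ) : ℝ :=
  (h / 2) * ((1 / 2) * a * ((v (j + 1) - v j) / h) ^ 2
    + (1 / 2) * b * ((v (j + 2) - v j) / h) ^ 2)
  + (h / 2) * ((1 / 2) * a * ((v j - v (j - 1)) / h) ^ 2
    + (1 / 2) * b * ((v j - v (j - 2)) / h) ^ 2)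

/-- The quadratic QCE energy with atomistic region `{-K,…,K}`. -/
noncomputable def qceEnergy (a b h : ℝ) (N K : ℤ) (v : ℤ → ℝ) : ℝ :=
  (∑ l ∈ Finset.Icc (-N + 1) (-K - 1), h * What a b (Dq h v l))
    + (1 / 2) * h * What a b (Dq h v (-K))
    + (∑ j ∈ Finset.Icc (-K) K, Ehat a b h v j)
    + (1 / 2) * h * What a b (Dq h v (K + 1))
    + ∑ l ∈ Finset.Icc (K + 2) N, h * What a b (Dq h v l)

/-- The QCE operator `L^{qce,h}` for indices `0 ≤ j ≤ N` (`a = φ''_F`, `b = φ''_{2F}`). -/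
noncomputable def LqceP (a b h : ℝ) (K : ℤ) (u : ℤ → ℝ) (j : ℤ) : ℝ :=
  a * (-u (j + 1) + 2 * u j - u (j - 1)) / h ^ 2 +
  (if j ≤ K - 2 then
      4 * b * (-u (j + 2) + 2 * u j - u (j - 2)) / (4 * h ^ 2)
    else if j = K - 1 then
      4 * b * (-u (j + 2) + 2 * u j - u (j - 2)) / (4 * h ^ 2)
        + (b / h) * ((u (j + 2) - u j) / (2 * h))
    else if j = K then
      4 * b * (-u (j + 2) + 2 * u j - u (j - 2)) / (4 * h ^ 2)
        - (2 * b / h) * ((u (j + 1) - u j) / h)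
        + (b / h) * ((u (j + 2) - u j) / (2 * h))
    else if j = K + 1 then
      4 * b * (-u (j + 1) + 2 * u j - u (j - 1)) / h ^ 2
        - (2 * b / h) * ((u j - u (j - 1)) / h)
        + (b / h) * ((u j - u (j - 2)) / (2 * h))
    else if j = K + 2 then
      4 * b * (-u (j + 1) + 2 * u j - u (j - 1)) / h ^ 2
        + (b / h) * ((u j - u (j - 2)) / (2 * h))
    else
      4 * b * (-u (j + 1) + 2 * u j - u (j - 1)) / h ^ 2)

/-- The QCE operator extended to all indices by the symmetry `S L S = L`,
where `(Su)_j = -u_{-j}`. -/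
noncomputable def Lqce (a b h : ℝ) (K : ℤ) (u : ℤ → ℝ) (j : ℤ) : ℝ :=
  if 0 ≤ j then LqceP a b h K u j
  else -LqceP a b h K (fun i => -u (-i)) (-j)

set_option maxHeartbeats 2000000 in
/-- Summing the QCE residual equations across the interface: if `e` equals the
atomistic profile `m₁ h j + β(λ^j - λ^{-j})/λ^K` for `0 ≤ j ≤ K`, the continuum
profile `m₂ h j - m₂` for `K+2 ≤ j ≤ N` (with arbitrary value at `j = K+1`),
and is odd, then `Σ_{j=K-1}^{K+2} (L^{qce,h}e)_j = (φ''_F + 4φ''_{2F})(m₁-m₂)/h`. -/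
theorem qce_interface_sum (N K : ℤ) (hN : 1 ≤ N) (hK : 2 ≤ K) (hKN : K ≤ N - 3)
    (a b h lam m1 m2 β : ℝ) (ha : 0 < a) (hb : b < 0) (hab : 0 < a + 4 * b)
    (hh : h = 1 / (N : ℝ)) (hlam1 : 1 < lam)
    (hroot : -b * lam ^ 2 - a * lam + 2 * (a + b) - a / lam - b / lam ^ 2 = 0)
    (e : ℤ → ℝ)
    (he1 : ∀ j : ℤ, 0 ≤ j → j ≤ K →
      e j = m1 * h * (j : ℝ) + β * (lam ^ j - lam ^ (-j)) / lam ^ K)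
    (he2 : ∀ j : ℤ, K + 2 ≤ j → j ≤ N → e j = m2 * h * (j : ℝ) - m2)
    (hodd : ∀ j : ℤ, e (-j) = -e j) :
    ∑ j ∈ Finset.Icc (K - 1) (K + 2), Lqce a b h K e j =
      (a + 4 * b) * (m1 - m2) / h := by

  have hlam0 : lam ≠ 0 := by positivity
  have hlamm1 : lam - 1 ≠ 0 := by nlinarith
  have hNpos : (0:ℝ) < (N:ℝ) := by exact_mod_cast (by omega : (0:ℤ) < N)
  have hh0 : h ≠ 0 := by rw [hh]; positivity
  have hY : lam ^ K ≠ 0 := zpow_ne_zero _ hlam0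
  -- polynomial form of the root equation
  have hC : b * lam ^ 3 + (a + b) * lam ^ 2 - (a + b) * lam - b = 0 := by
    have h2 := hroot
    field_simp at h2
    have h3 : lam * ((lam - 1) * (b * lam ^ 3 + (a + b) * lam ^ 2 - (a + b) * lam - b)) = 0 := by
      linear_combination -lam * h2
    rcases mul_eq_zero.mp h3 with h4 | h4
    · exact absurd h4 hlam0
    rcases mul_eq_zero.mp h4 with h5 | h5
    · exact absurd h5 hlamm1
    · exact h5
  -- extend the atomistic profile to negative indices by oddness
  have he1' : ∀ j : ℤ, -K ≤ j → j ≤ K →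
      e j = m1 * h * (j : ℝ) + β * (lam ^ j - lam ^ (-j)) / lam ^ K := by
    intro j hj1 hj2
    rcases le_or_gt 0 j with hj0 | hj0
    · exact he1 j hj0 hj2
    · have h5 : e j = -e (-j) := by
        have := hodd (-j); rw [neg_neg] at this; linarith
      rw [h5, he1 (-j) (by omega) (by omega)]
      push_cast
      rw [neg_neg]
      ring
  -- values of e at the relevant indices
  have hEK : e K = m1 * h * (K : ℝ) + β * (lam ^ K - lam ^ (-K)) / lam ^ K :=
    he1' K (by omega) le_rfl
  have hEK1 : e (K - 1) = m1 * h * ((K : ℝ) - 1)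
      + β * (lam ^ (K - 1) - lam ^ (-(K - 1))) / lam ^ K := by
    rw [he1' (K - 1) (by omega) (by omega)]; push_cast; ring
  have hEK2 : e (K - 2) = m1 * h * ((K : ℝ) - 2)
      + β * (lam ^ (K - 2) - lam ^ (-(K - 2))) / lam ^ K := by
    rw [he1' (K - 2) (by omega) (by omega)]; push_cast; ring
  have hEK3 : e (K - 3) = m1 * h * ((K : ℝ) - 3)
      + β * (lam ^ (K - 3) - lam ^ (-(K - 3))) / lam ^ K := by
    rw [he1' (K - 3) (by omega) (by omega)]; push_cast; ring
  have hEP2 : e (K + 2) = m2 * h * ((K : ℝ) + 2) - m2 := by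
    rw [he2 (K + 2) (by omega) (by omega)]; push_cast; ring
  have hEP3 : e (K + 3) = m2 * h * ((K : ℝ) + 3) - m2 := by
    rw [he2 (K + 3) (by omega) (by omega)]; push_cast; ring
  -- zpow rewrites
  have hz1 : lam ^ (K - 1) = lam ^ K / lam := by
    rw [zpow_sub₀ hlam0, zpow_one]
  have hz2 : lam ^ (K - 2) = lam ^ K / lam ^ 2 := by
    rw [zpow_sub₀ hlam0]; norm_cast
  have hz3 : lam ^ (K - 3) = lam ^ K / lam ^ 3 := by
    rw [zpow_sub₀ hlam0]; norm_cast
  have hzn : lam ^ (-K) = (lam ^ K)⁻¹ := by rw [zpow_neg]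
  have hzn1 : lam ^ (-(K - 1)) = lam / lam ^ K := by
    rw [show -(K - 1) = 1 - K by ring, zpow_sub₀ hlam0, zpow_one]
  have hzn2 : lam ^ (-(K - 2)) = lam ^ 2 / lam ^ K := by
    rw [show -(K - 2) = 2 - K by ring, zpow_sub₀ hlam0]; norm_cast
  have hzn3 : lam ^ (-(K - 3)) = lam ^ 3 / lam ^ K := by
    rw [show -(K - 3) = 3 - K by ring, zpow_sub₀ hlam0]; norm_cast
  rw [hz1, hzn1] at hEK1
  rw [hz2, hzn2] at hEK2
  rw [hz3, hzn3] at hEK3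
  rw [hzn] at hEK
  -- expand the sum
  have hset : Finset.Icc (K - 1) (K + 2) = {K - 1, K, K + 1, K + 2} := by
    ext x; simp [Finset.mem_Icc, Finset.mem_insert]; omega
  rw [hset]
  rw [Finset.sum_insert (by simp only [Finset.mem_insert, Finset.mem_singleton]; omega), Finset.sum_insert (by simp only [Finset.mem_insert, Finset.mem_singleton]; omega),
      Finset.sum_insert (by simp only [Finset.mem_insert, Finset.mem_singleton]; omega), Finset.sum_singleton]
  unfold Lqce LqceP
  rw [if_pos (by omega : (0:ℤ) ≤ K - 1), if_pos (by omega : (0:ℤ) ≤ K),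
      if_pos (by omega : (0:ℤ) ≤ K + 1), if_pos (by omega : (0:ℤ) ≤ K + 2)]
  rw [if_neg (by omega : ¬ (K - 1 ≤ K - 2)), if_pos rfl]
  rw [if_neg (by omega : ¬ (K ≤ K - 2)), if_neg (by omega : ¬ (K = K - 1)), if_pos rfl]
  rw [if_neg (by omega : ¬ (K + 1 ≤ K - 2)), if_neg (by omega : ¬ (K + 1 = K - 1)),
      if_neg (by omega : ¬ (K + 1 = K)), if_pos rfl]
  rw [if_neg (by omega : ¬ (K + 2 ≤ K - 2)), if_neg (by omega : ¬ (K + 2 = K - 1)),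
      if_neg (by omega : ¬ (K + 2 = K)), if_neg (by omega : ¬ (K + 2 = K + 1)), if_pos rfl]
  simp only [show K - 1 + 1 = K from by ring, show K - 1 - 1 = K - 2 from by ring,
    show K - 1 + 2 = K + 1 from by ring, show K - 1 - 2 = K - 3 from by ring,
    show K + 1 + 1 = K + 2 from by ring, show K + 1 - 1 = K from by ring,
    show K + 1 - 2 = K - 1 from by ring, show K + 2 + 1 = K + 3 from by ring,
    show K + 2 - 1 = K + 1 from by ring, show K + 2 - 2 = K from by ring]
  rw [hEK, hEK1, hEK2, hEK3, hEP2, hEP3]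
  linear_combination (norm := (field_simp; ring1))
    (β * ((lam ^ K) ^ 2 + lam ^ 3) / ((lam ^ K) ^ 2 * h ^ 2 * lam ^ 3)) * hC
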